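/- Let ρ be a convex risk measure on X with ρ(0) = 0, and for Ψ ∈ X define the marginal risk measure ρ_∞(Ψ) = inf_{γ>0} γ·ρ(Ψ/γ). Then: (i) if m ≤ Ψ ≤ M pointwise for reals m, M, then −M ≤ ρ_∞(Ψ) ≤ −m, so ρ_∞ is real-valued; (ii) ρ_∞ is a coherent risk measure: it is convex, monotone, cash translation invariant, and positively homogeneous (ρ_∞(λΨ) = λ·ρ_∞(Ψ) for all λ ≥ 0); (iii) if ρ is continuous from below, then ρ_∞ is continuous from below. -/

import Mathlib

open BoundedContinuousFunction Filter

/-- A (monetary) convex risk measure on the space `Ω →ᵇ ℝ` of bounded functions on `Ω`. -/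
def IsConvexRiskMeasure {Ω : Type*} [TopologicalSpace Ω] (ρ : (Ω →ᵇ ℝ) → ℝ) : Prop :=
  (∀ (Φ Ψ : Ω →ᵇ ℝ) (l : ℝ), 0 ≤ l → l ≤ 1 →
      ρ (l • Φ + (1 - l) • Ψ) ≤ l * ρ Φ + (1 - l) * ρ Ψ) ∧
  (∀ Φ Ψ : Ω →ᵇ ℝ, (∀ ω, Φ ω ≤ Ψ ω) → ρ Ψ ≤ ρ Φ) ∧
  (∀ (Φ : Ω →ᵇ ℝ) (m : ℝ), ρ (Φ + BoundedContinuousFunction.const Ω m) = ρ Φ - m)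

/-- Continuity from below: for every pointwise non-decreasing sequence converging
pointwise, the values of `ρ` converge. -/
def ContinuousFromBelow {Ω : Type*} [TopologicalSpace Ω] (ρ : (Ω →ᵇ ℝ) → ℝ) : Prop :=
  ∀ (Ψn : ℕ → (Ω →ᵇ ℝ)) (Ψ : Ω →ᵇ ℝ),
    (∀ n ω, Ψn n ω ≤ Ψn (n + 1) ω) →
    (∀ ω, Tendsto (fun n => Ψn n ω) atTop (nhds (Ψ ω))) →
    Tendsto (fun n => ρ (Ψn n)) atTop (nhds (ρ Ψ))

/-- The marginal risk measure `ρ_∞(Ψ) = inf_{γ > 0} γ ρ(Ψ/γ)`. -/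
noncomputable def marginalRM {Ω : Type*} [TopologicalSpace Ω]
    (ρ : (Ω →ᵇ ℝ) → ℝ) (Ψ : Ω →ᵇ ℝ) : ℝ :=
  ⨅ γ : {g : ℝ // 0 < g}, (γ : ℝ) * ρ (((γ : ℝ))⁻¹ • Ψ)

section aux

variable {Ω : Type*} [TopologicalSpace Ω] [Nonempty Ω] {ρ : (Ω →ᵇ ℝ) → ℝ}

lemma rho_const (htrans : ∀ (Φ : Ω →ᵇ ℝ) (m : ℝ), ρ (Φ + const Ω m) = ρ Φ - m)
    (h0 : ρ 0 = 0) (c : ℝ) : ρ (const Ω c) = -c := by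
  have := htrans 0 c
  simpa [h0] using this

lemma rho_scale
    (hconv : ∀ (Φ Ψ : Ω →ᵇ ℝ) (l : ℝ), 0 ≤ l → l ≤ 1 →
      ρ (l • Φ + (1 - l) • Ψ) ≤ l * ρ Φ + (1 - l) * ρ Ψ)
    (h0 : ρ 0 = 0) {t : ℝ} (ht0 : 0 ≤ t) (ht1 : t ≤ 1) (Φ : Ω →ᵇ ℝ) :
    ρ (t • Φ) ≤ t * ρ Φ := by
  have := hconv Φ 0 t ht0 ht1
  simpa [h0] using this

lemma f_le (hmono : ∀ Φ Ψ : Ω →ᵇ ℝ, (∀ ω, Φ ω ≤ Ψ ω) → ρ Ψ ≤ ρ Φ)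
    (htrans : ∀ (Φ : Ω →ᵇ ℝ) (m : ℝ), ρ (Φ + const Ω m) = ρ Φ - m)
    (h0 : ρ 0 = 0) {Ψ : Ω →ᵇ ℝ} {m γ : ℝ} (hm : ∀ ω, m ≤ Ψ ω) (hγ : 0 < γ) :
    γ * ρ (γ⁻¹ • Ψ) ≤ -m := by
  have h1 : ∀ ω, (const Ω (γ⁻¹ * m)) ω ≤ (γ⁻¹ • Ψ) ω := fun ω => by
    simp only [const_apply, coe_smul, Pi.smul_apply, smul_eq_mul]
    exact mul_le_mul_of_nonneg_left (hm ω) (inv_nonneg.2 hγ.le)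
  have h2 : ρ (γ⁻¹ • Ψ) ≤ ρ (const Ω (γ⁻¹ * m)) := hmono _ _ h1
  rw [rho_const htrans h0] at h2
  have h3 := mul_le_mul_of_nonneg_left h2 hγ.le
  calc γ * ρ (γ⁻¹ • Ψ) ≤ γ * -(γ⁻¹ * m) := h3
    _ = -m := by field_simp

lemma f_ge (hmono : ∀ Φ Ψ : Ω →ᵇ ℝ, (∀ ω, Φ ω ≤ Ψ ω) → ρ Ψ ≤ ρ Φ)
    (htrans : ∀ (Φ : Ω →ᵇ ℝ) (m : ℝ), ρ (Φ + const Ω m) = ρ Φ - m)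
    (h0 : ρ 0 = 0) {Ψ : Ω →ᵇ ℝ} {M γ : ℝ} (hM : ∀ ω, Ψ ω ≤ M) (hγ : 0 < γ) :
    -M ≤ γ * ρ (γ⁻¹ • Ψ) := by
  have h1 : ∀ ω, (γ⁻¹ • Ψ) ω ≤ (const Ω (γ⁻¹ * M)) ω := fun ω => by
    simp only [const_apply, coe_smul, Pi.smul_apply, smul_eq_mul]
    exact mul_le_mul_of_nonneg_left (hM ω) (inv_nonneg.2 hγ.le)
  have h2 : ρ (const Ω (γ⁻¹ * M)) ≤ ρ (γ⁻¹ • Ψ) := hmono _ _ h1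
  rw [rho_const htrans h0] at h2
  have h3 := mul_le_mul_of_nonneg_left h2 hγ.le
  calc -M = γ * -(γ⁻¹ * M) := by field_simp
    _ ≤ γ * ρ (γ⁻¹ • Ψ) := h3

lemma f_anti
    (hconv : ∀ (Φ Ψ : Ω →ᵇ ℝ) (l : ℝ), 0 ≤ l → l ≤ 1 →
      ρ (l • Φ + (1 - l) • Ψ) ≤ l * ρ Φ + (1 - l) * ρ Ψ)
    (h0 : ρ 0 = 0) (Ψ : Ω →ᵇ ℝ) {γ γ' : ℝ} (hγ : 0 < γ) (h : γ ≤ γ') :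
    γ' * ρ (γ'⁻¹ • Ψ) ≤ γ * ρ (γ⁻¹ • Ψ) := by
  have hγ' : 0 < γ' := hγ.trans_le h
  have key : γ'⁻¹ • Ψ = (γ / γ') • (γ⁻¹ • Ψ) := by
    rw [smul_smul]
    congr 1
    field_simp
  have hs := rho_scale hconv h0 (div_nonneg hγ.le hγ'.le) ((div_le_one hγ').2 h) (γ⁻¹ • Ψ)
  rw [key]
  have h3 := mul_le_mul_of_nonneg_left hs hγ'.le
  calc γ' * ρ ((γ / γ') • (γ⁻¹ • Ψ)) ≤ γ' * (γ / γ' * ρ (γ⁻¹ • Ψ)) := h3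
    _ = γ * ρ (γ⁻¹ • Ψ) := by field_simp

end aux

section aux2

variable {Ω : Type*} [TopologicalSpace Ω] [Nonempty Ω] {ρ : (Ω →ᵇ ℝ) → ℝ}

instance : Nonempty {g : ℝ // 0 < g} := ⟨⟨1, one_pos⟩⟩

lemma bdd_f (hmono : ∀ Φ Ψ : Ω →ᵇ ℝ, (∀ ω, Φ ω ≤ Ψ ω) → ρ Ψ ≤ ρ Φ)
    (htrans : ∀ (Φ : Ω →ᵇ ℝ) (m : ℝ), ρ (Φ + const Ω m) = ρ Φ - m)
    (h0 : ρ 0 = 0) (Ψ : Ω →ᵇ ℝ) :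
    BddBelow (Set.range fun γ : {g : ℝ // 0 < g} => (γ : ℝ) * ρ (((γ : ℝ))⁻¹ • Ψ)) := by
  refine ⟨-‖Ψ‖, ?_⟩
  rintro x ⟨γ, rfl⟩
  exact f_ge hmono htrans h0 (fun ω => (abs_le.mp (Ψ.norm_coe_le_norm ω)).2) γ.2

lemma bdd_fn (hmono : ∀ Φ Ψ : Ω →ᵇ ℝ, (∀ ω, Φ ω ≤ Ψ ω) → ρ Ψ ≤ ρ Φ)
    (htrans : ∀ (Φ : Ω →ᵇ ℝ) (m : ℝ), ρ (Φ + const Ω m) = ρ Φ - m)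
    (h0 : ρ 0 = 0) (Ψ : Ω →ᵇ ℝ) :
    BddBelow (Set.range fun n : ℕ => ((n : ℝ) + 1) * ρ (((n : ℝ) + 1)⁻¹ • Ψ)) := by
  refine ⟨-‖Ψ‖, ?_⟩
  rintro x ⟨n, rfl⟩
  exact f_ge hmono htrans h0 (fun ω => (abs_le.mp (Ψ.norm_coe_le_norm ω)).2)
    (by positivity)

lemma marginal_eq_nat
    (hconv : ∀ (Φ Ψ : Ω →ᵇ ℝ) (l : ℝ), 0 ≤ l → l ≤ 1 →
      ρ (l • Φ + (1 - l) • Ψ) ≤ l * ρ Φ + (1 - l) * ρ Ψ)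
    (hmono : ∀ Φ Ψ : Ω →ᵇ ℝ, (∀ ω, Φ ω ≤ Ψ ω) → ρ Ψ ≤ ρ Φ)
    (htrans : ∀ (Φ : Ω →ᵇ ℝ) (m : ℝ), ρ (Φ + const Ω m) = ρ Φ - m)
    (h0 : ρ 0 = 0) (Ψ : Ω →ᵇ ℝ) :
    marginalRM ρ Ψ = ⨅ n : ℕ, ((n : ℝ) + 1) * ρ (((n : ℝ) + 1)⁻¹ • Ψ) := by
  apply le_antisymm
  · apply le_ciInf
    intro n
    exact ciInf_le (bdd_f hmono htrans h0 Ψ) ⟨(n : ℝ) + 1, by positivity⟩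
  · apply le_ciInf
    intro γ
    obtain ⟨n, hn⟩ := exists_nat_ge (γ : ℝ)
    calc ⨅ n : ℕ, ((n : ℝ) + 1) * ρ (((n : ℝ) + 1)⁻¹ • Ψ)
        ≤ ((n : ℝ) + 1) * ρ (((n : ℝ) + 1)⁻¹ • Ψ) := ciInf_le (bdd_fn hmono htrans h0 Ψ) n
      _ ≤ (γ : ℝ) * ρ (((γ : ℝ))⁻¹ • Ψ) :=
          f_anti hconv h0 Ψ γ.2 (hn.trans (by linarith))

lemma tendsto_marg
    (hconv : ∀ (Φ Ψ : Ω →ᵇ ℝ) (l : ℝ), 0 ≤ l → l ≤ 1 →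
      ρ (l • Φ + (1 - l) • Ψ) ≤ l * ρ Φ + (1 - l) * ρ Ψ)
    (hmono : ∀ Φ Ψ : Ω →ᵇ ℝ, (∀ ω, Φ ω ≤ Ψ ω) → ρ Ψ ≤ ρ Φ)
    (htrans : ∀ (Φ : Ω →ᵇ ℝ) (m : ℝ), ρ (Φ + const Ω m) = ρ Φ - m)
    (h0 : ρ 0 = 0) (Ψ : Ω →ᵇ ℝ) :
    Tendsto (fun n : ℕ => ((n : ℝ) + 1) * ρ (((n : ℝ) + 1)⁻¹ • Ψ)) atTop
      (nhds (marginalRM ρ Ψ)) := by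
  rw [marginal_eq_nat hconv hmono htrans h0]
  apply tendsto_atTop_ciInf
  · intro a b hab
    exact f_anti hconv h0 Ψ (by positivity) (by have : (a:ℝ) ≤ b := Nat.cast_le.2 hab; linarith)
  · exact bdd_fn hmono htrans h0 Ψ

end aux2

section aux3

variable {Ω : Type*} [TopologicalSpace Ω] [Nonempty Ω] {ρ : (Ω →ᵇ ℝ) → ℝ}

lemma marg_mono (hmono : ∀ Φ Ψ : Ω →ᵇ ℝ, (∀ ω, Φ ω ≤ Ψ ω) → ρ Ψ ≤ ρ Φ)
    (htrans : ∀ (Φ : Ω →ᵇ ℝ) (m : ℝ), ρ (Φ + const Ω m) = ρ Φ - m)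
    (h0 : ρ 0 = 0) {Φ Ψ : Ω →ᵇ ℝ} (h : ∀ ω, Φ ω ≤ Ψ ω) :
    marginalRM ρ Ψ ≤ marginalRM ρ Φ := by
  apply ciInf_mono (bdd_f hmono htrans h0 Ψ)
  intro γ
  refine mul_le_mul_of_nonneg_left (hmono _ _ fun ω => ?_) γ.2.le
  simp only [coe_smul, Pi.smul_apply, smul_eq_mul]
  exact mul_le_mul_of_nonneg_left (h ω) (inv_nonneg.2 γ.2.le)

end aux3


/-- If `ρ(0) = 0`, the marginal risk measure `ρ_∞` is real-valued with
`-M ≤ ρ_∞(Ψ) ≤ -m` whenever `m ≤ Ψ ≤ M`, it is a coherent risk measure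
(convex, monotone, translation invariant, positively homogeneous), and it is
continuous from below whenever `ρ` is. -/
theorem stmt2 {Ω : Type*} [TopologicalSpace Ω] [DiscreteTopology Ω] [Nonempty Ω]
    (ρ : (Ω →ᵇ ℝ) → ℝ) (hρ : IsConvexRiskMeasure ρ) (h0 : ρ 0 = 0) :
    (∀ (Ψ : Ω →ᵇ ℝ) (m M : ℝ), (∀ ω, m ≤ Ψ ω) → (∀ ω, Ψ ω ≤ M) →
        -M ≤ marginalRM ρ Ψ ∧ marginalRM ρ Ψ ≤ -m) ∧
    IsConvexRiskMeasure (marginalRM ρ) ∧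
    (∀ (Ψ : Ω →ᵇ ℝ) (l : ℝ), 0 ≤ l → marginalRM ρ (l • Ψ) = l * marginalRM ρ Ψ) ∧
    (ContinuousFromBelow ρ → ContinuousFromBelow (marginalRM ρ)) := by
  obtain ⟨hconv, hmono, htrans⟩ := hρ
  have bdd := bdd_f hmono htrans h0 (ρ := ρ)
  refine ⟨?_, ⟨?_, ?_, ?_⟩, ?_, ?_⟩
  · -- bounds
    intro Ψ m M hm hM
    constructor
    · exact le_ciInf fun γ => f_ge hmono htrans h0 hM γ.2
    · exact (ciInf_le (bdd Ψ) ⟨1, one_pos⟩).trans (f_le hmono htrans h0 hm one_pos)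
  · -- convexity
    intro Φ Ψ l hl0 hl1
    have key : ∀ n : ℕ, marginalRM ρ (l • Φ + (1 - l) • Ψ) ≤
        l * (((n : ℝ) + 1) * ρ (((n : ℝ) + 1)⁻¹ • Φ)) +
          (1 - l) * (((n : ℝ) + 1) * ρ (((n : ℝ) + 1)⁻¹ • Ψ)) := by
      intro n
      set γ : ℝ := (n : ℝ) + 1 with hγdef
      have hγ : (0 : ℝ) < γ := by positivity
      have e : γ⁻¹ • (l • Φ + (1 - l) • Ψ) = l • (γ⁻¹ • Φ) + (1 - l) • (γ⁻¹ • Ψ) := by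
        rw [smul_add, smul_comm γ⁻¹ l Φ, smul_comm γ⁻¹ (1 - l) Ψ]
      have h1 : marginalRM ρ (l • Φ + (1 - l) • Ψ) ≤
          γ * ρ (γ⁻¹ • (l • Φ + (1 - l) • Ψ)) := ciInf_le (bdd _) ⟨γ, hγ⟩
      rw [e] at h1
      have h2 := hconv (γ⁻¹ • Φ) (γ⁻¹ • Ψ) l hl0 hl1
      have h3 := mul_le_mul_of_nonneg_left h2 hγ.le
      calc marginalRM ρ (l • Φ + (1 - l) • Ψ)
          ≤ γ * (l * ρ (γ⁻¹ • Φ) + (1 - l) * ρ (γ⁻¹ • Ψ)) := h1.trans h3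
        _ = l * (γ * ρ (γ⁻¹ • Φ)) + (1 - l) * (γ * ρ (γ⁻¹ • Ψ)) := by ring
    have tΦ := tendsto_marg hconv hmono htrans h0 Φ
    have tΨ := tendsto_marg hconv hmono htrans h0 Ψ
    exact ge_of_tendsto ((tΦ.const_mul l).add (tΨ.const_mul (1 - l)))
      (Filter.Eventually.of_forall key)
  · -- monotone
    intro Φ Ψ h
    exact marg_mono hmono htrans h0 h
  · -- translation invariance
    intro Φ m
    have e : ∀ γ : {g : ℝ // 0 < g},
        (γ : ℝ) * ρ ((γ : ℝ)⁻¹ • (Φ + const Ω m)) = (γ : ℝ) * ρ ((γ : ℝ)⁻¹ • Φ) - m := by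
      intro γ
      have hγ : (0:ℝ) < γ := γ.2
      have e2 : (γ : ℝ)⁻¹ • (Φ + const Ω m) = (γ : ℝ)⁻¹ • Φ + const Ω ((γ : ℝ)⁻¹ * m) := by
        ext ω
        simp [mul_add]
      rw [e2, htrans, mul_sub]
      congr 1
      field_simp
    have e3 : marginalRM ρ (Φ + const Ω m) =
        ⨅ γ : {g : ℝ // 0 < g}, ((γ : ℝ) * ρ ((γ : ℝ)⁻¹ • Φ) - m) := by
      unfold marginalRM
      exact iInf_congr e
    have bdd' : BddBelow (Set.range fun γ : {g : ℝ // 0 < g} =>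
        ((γ : ℝ) * ρ ((γ : ℝ)⁻¹ • Φ) - m)) := by
      refine ⟨-‖Φ‖ - m, ?_⟩
      rintro x ⟨γ, rfl⟩
      have := f_ge hmono htrans h0 (fun ω => (abs_le.mp (Φ.norm_coe_le_norm ω)).2) γ.2
      dsimp only
      linarith
    have mdef : marginalRM ρ Φ =
        ⨅ γ : {g : ℝ // 0 < g}, (γ : ℝ) * ρ (((γ : ℝ))⁻¹ • Φ) := rfl
    rw [e3, mdef]
    apply le_antisymm
    · rw [le_sub_iff_add_le]
      refine le_ciInf fun γ => ?_
      have := ciInf_le bdd' γ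
      linarith
    · refine le_ciInf fun γ => ?_
      have h2 := ciInf_le (bdd Φ) γ
      linarith
  · -- positive homogeneity
    intro Ψ l hl
    rcases eq_or_lt_of_le hl with h | h
    · subst h
      have e : ∀ γ : {g : ℝ // 0 < g}, (γ : ℝ) * ρ ((γ : ℝ)⁻¹ • ((0:ℝ) • Ψ)) = 0 := by
        intro γ
        simp [h0]
      have : marginalRM ρ ((0:ℝ) • Ψ) = 0 := by
        unfold marginalRM
        rw [iInf_congr e]
        exact ciInf_const
      rw [zero_smul] at this
      simp [this]
    · have hl' : l ≠ 0 := h.ne'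
      apply le_antisymm
      · have h1 : ∀ δ : {g : ℝ // 0 < g},
            marginalRM ρ (l • Ψ) ≤ l * ((δ : ℝ) * ρ ((δ : ℝ)⁻¹ • Ψ)) := by
          intro δ
          have hδ : (0:ℝ) < δ := δ.2
          have e : ((l * (δ : ℝ))⁻¹) • (l • Ψ) = ((δ : ℝ))⁻¹ • Ψ := by
            rw [smul_smul]
            congr 1
            field_simp
          have h2 : marginalRM ρ (l • Ψ) ≤ (l * (δ:ℝ)) * ρ ((l * (δ:ℝ))⁻¹ • (l • Ψ)) :=
            ciInf_le (bdd (l • Ψ)) ⟨l * δ, mul_pos h hδ⟩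
          rw [e] at h2
          calc marginalRM ρ (l • Ψ) ≤ l * (δ : ℝ) * ρ ((δ : ℝ)⁻¹ • Ψ) := h2
            _ = l * ((δ : ℝ) * ρ ((δ : ℝ)⁻¹ • Ψ)) := by ring
        have h2 : marginalRM ρ (l • Ψ) / l ≤ marginalRM ρ Ψ :=
          le_ciInf fun δ => (div_le_iff₀ h).2 (by linarith [h1 δ])
        have := (div_le_iff₀ h).1 h2
        linarith
      · refine le_ciInf fun γ => ?_
        have hγ : (0:ℝ) < γ := γ.2
        have e : ((γ : ℝ))⁻¹ • (l • Ψ) = (((γ : ℝ) / l))⁻¹ • Ψ := by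
          rw [smul_smul]
          congr 1
          field_simp
        have h1 : marginalRM ρ Ψ ≤ ((γ:ℝ)/l) * ρ (((γ:ℝ)/l)⁻¹ • Ψ) :=
          ciInf_le (bdd Ψ) ⟨(γ : ℝ) / l, div_pos hγ h⟩
        have h2 := mul_le_mul_of_nonneg_left h1 hl
        rw [e]
        calc l * marginalRM ρ Ψ
            ≤ l * ((γ : ℝ) / l * ρ (((γ : ℝ) / l)⁻¹ • Ψ)) := h2
          _ = (γ : ℝ) * ρ (((γ : ℝ) / l)⁻¹ • Ψ) := by field_simp
  · -- continuity from below
    intro hcb Ψn Ψ hseq hptw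
    have hle : ∀ n ω, Ψn n ω ≤ Ψ ω := by
      intro n ω
      have mono : Monotone fun k => Ψn k ω := monotone_nat_of_le_succ fun k => hseq k ω
      exact ge_of_tendsto (hptw ω) (eventually_atTop.2 ⟨n, fun m hm => mono hm⟩)
    have hanti : Antitone fun n => marginalRM ρ (Ψn n) :=
      antitone_nat_of_succ_le fun n => marg_mono hmono htrans h0 (hseq n)
    have hbdd : BddBelow (Set.range fun n => marginalRM ρ (Ψn n)) := by
      refine ⟨marginalRM ρ Ψ, ?_⟩
      rintro x ⟨n, rfl⟩
      exact marg_mono hmono htrans h0 (hle n)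
    have t := tendsto_atTop_ciInf hanti hbdd
    have heq : ⨅ n, marginalRM ρ (Ψn n) = marginalRM ρ Ψ := by
      apply le_antisymm
      · refine le_ciInf fun γ => ?_
        have hγ : (0:ℝ) < γ := γ.2
        have tρ : Tendsto (fun n => (γ : ℝ) * ρ ((γ : ℝ)⁻¹ • Ψn n)) atTop
            (nhds ((γ : ℝ) * ρ ((γ : ℝ)⁻¹ • Ψ))) := by
          have hcb' := hcb (fun n => (γ : ℝ)⁻¹ • Ψn n) ((γ : ℝ)⁻¹ • Ψ)
            (fun n ω => by
              simp only [coe_smul, Pi.smul_apply, smul_eq_mul]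
              exact mul_le_mul_of_nonneg_left (hseq n ω) (inv_nonneg.2 hγ.le))
            (fun ω => by
              simp only [coe_smul, Pi.smul_apply, smul_eq_mul]
              exact (hptw ω).const_mul _)
          exact hcb'.const_mul _
        refine ge_of_tendsto tρ (Filter.Eventually.of_forall fun n => ?_)
        exact (ciInf_le hbdd n).trans (ciInf_le (bdd (Ψn n)) γ)
      · exact le_ciInf fun n => marg_mono hmono htrans h0 (hle n)
    rwa [heq] at t
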